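/- arXiv:2104.11955 — 12 statements merged into one kernel-verified Lean document; each statement's English description precedes it below -/
import Mathlib

section
/- For any two structures 𝔄 and 𝔅 over a first-order language L and any homomorphism h : 𝔄 → 𝔅, there exist an L-structure ℭ, an injective homomorphism h₁ : 𝔄 → ℭ, and a strong surjective homomorphism h₂ : ℭ → 𝔅 such that h = h₂ ∘ h₁. -/
open FirstOrder FirstOrder.Language

universe u v w

/-- A homomorphism of `L`-structures is *strong* if it both preserves and reflects all
relations, i.e. `R^𝔄(a⃗) ⟺ R^𝔅(h(a⃗))` for every relation symbol `R` and tuple `a⃗`. -/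
def IsStrongHom {L : FirstOrder.Language.{v, w}} {M : Type*} {N : Type*}
    [L.Structure M] [L.Structure N] (h : M →[L] N) : Prop :=
  ∀ ⦃n : ℕ⦄ (r : L.Relations n) (x : Fin n → M),
    Structure.RelMap r (⇑h ∘ x) ↔ Structure.RelMap r x

/-- Over a language with only relation and constant symbols, every
homomorphism `h : 𝔄 → 𝔅` between (nonempty) structures factors as a strong surjective
homomorphism following an injective homomorphism. -/
theorem hom_factors_as_injective_then_strong_surjective
    (L : FirstOrder.Language.{v, w}) (hL : ∀ n : ℕ, IsEmpty (L.Functions (n + 1)))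
    (M N : Type u) [L.Structure M] [L.Structure N] [Nonempty M] [Nonempty N]
    (h : M →[L] N) :
    ∃ (C : Type u) (_ : L.Structure C) (_ : Nonempty C)
      (h₁ : M →[L] C) (h₂ : C →[L] N),
      Function.Injective h₁ ∧
      IsStrongHom h₂ ∧ Function.Surjective h₂ ∧
      ∀ a : M, h a = h₂ (h₁ a) := by
  classical
  let g : M ⊕ N → N := Sum.elim h id
  letI S : L.Structure (M ⊕ N) :=
    { funMap := fun {n} f x =>
        match n, f with
        | 0, f => Sum.inl (Structure.funMap f Fin.elim0)
        | (n+1), f => ((hL n).elim f)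
      RelMap := fun {n} r x => Structure.RelMap r (g ∘ x) }
  have hfun0 : ∀ (f : L.Functions 0) (x : Fin 0 → M ⊕ N),
      Structure.funMap f x = Sum.inl (Structure.funMap f Fin.elim0) := fun f x => rfl
  refine ⟨M ⊕ N, S, ⟨Sum.inl (Classical.arbitrary M)⟩,
    ⟨Sum.inl, ?_, ?_⟩, ⟨g, ?_, ?_⟩, ?_, ?_, ?_, ?_⟩
  · intro n f x
    match n, f with
    | 0, f =>
      rw [hfun0]
      congr 1
      exact congrArg _ (funext fun i => i.elim0)
    | (n+1), f => exact ((hL n).elim f)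
  · intro n r x hx
    show Structure.RelMap r (g ∘ (Sum.inl ∘ x))
    have : g ∘ (Sum.inl ∘ x) = h ∘ x := rfl
    rw [this]
    exact h.map_rel r x hx
  · intro n f x
    match n, f with
    | 0, f =>
      rw [hfun0]
      show h (Structure.funMap f Fin.elim0) = _
      rw [h.map_fun]
      exact congrArg _ (funext fun i => i.elim0)
    | (n+1), f => exact ((hL n).elim f)
  · intro n r x hx
    exact hx
  · exact fun a b hab => Sum.inl.inj hab
  · intro n r x
    exact Iff.rfl
  · exact fun b => ⟨Sum.inr b, rfl⟩
  · intro a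
    rfl
end

section
/- Let Φ be a first-order L-sentence. There exist structures 𝔄 ⊨ Φ and 𝔅 ⊭ Φ with a homomorphism from 𝔄 to 𝔅 (i.e., Φ has a spoiler, equivalently the class of models of Φ is not closed under homomorphisms) if and only if Φ has an injective spoiler or Φ has a strong surjective spoiler. -/
open FirstOrder FirstOrder.Language

universe u v w

/-- `Φ` has a spoiler: a homomorphism from a model of `Φ` to a non-model of `Φ`. -/
def HasSpoiler.{u', v', w'} (L : FirstOrder.Language.{v', w'}) (Φ : L.Sentence) : Prop :=
  ∃ (A : Type u') (_ : L.Structure A) (_ : Nonempty A)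
    (B : Type u') (_ : L.Structure B) (_ : Nonempty B),
    A ⊨ Φ ∧ ¬ B ⊨ Φ ∧ Nonempty (A →[L] B)

/-- `Φ` has an injective spoiler. -/
def HasInjectiveSpoiler.{u', v', w'} (L : FirstOrder.Language.{v', w'}) (Φ : L.Sentence) :
    Prop :=
  ∃ (A : Type u') (_ : L.Structure A) (_ : Nonempty A)
    (B : Type u') (_ : L.Structure B) (_ : Nonempty B),
    A ⊨ Φ ∧ ¬ B ⊨ Φ ∧ ∃ h : A →[L] B, Function.Injective h

/-- `Φ` has a strong surjective spoiler. -/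
def HasStrongSurjectiveSpoiler.{u', v', w'} (L : FirstOrder.Language.{v', w'})
    (Φ : L.Sentence) : Prop :=
  ∃ (A : Type u') (_ : L.Structure A) (_ : Nonempty A)
    (B : Type u') (_ : L.Structure B) (_ : Nonempty B),
    A ⊨ Φ ∧ ¬ B ⊨ Φ ∧ ∃ h : A →[L] B, IsStrongHom h ∧ Function.Surjective h

/-- A copy of the domain of `h` with relations pulled back along `h`. -/
def PullCopy {L : FirstOrder.Language.{v, w}} {A : Type u} {B : Type u}
    [L.Structure A] [L.Structure B] (h : A →[L] B) : Type u := A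

instance pullCopyStructure {L : FirstOrder.Language.{v, w}} {A : Type u} {B : Type u}
    [L.Structure A] [L.Structure B] (h : A →[L] B) : L.Structure (PullCopy h) where
  funMap := fun {n} f x => (Structure.funMap f x : A)
  RelMap := fun {n} r x => Structure.RelMap r (⇑h ∘ (x : Fin n → A))

/-- The identity, as a hom from `A` to `PullCopy h`. -/
def toPullCopy {L : FirstOrder.Language.{v, w}} {A : Type u} {B : Type u}
    [L.Structure A] [L.Structure B] (h : A →[L] B) : A →[L] PullCopy h where
  toFun := fun a => (a : PullCopy h)
  map_fun' := fun {n} f x => rfl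
  map_rel' := fun {n} r x hx => h.map_rel r x hx

/-- The map from `PullCopy h` onto the range of `h`. -/
def pullCopyToRange {L : FirstOrder.Language.{v, w}} {A : Type u} {B : Type u}
    [L.Structure A] [L.Structure B] (h : A →[L] B) : PullCopy h →[L] h.range where
  toFun := fun a => ⟨h a, a, rfl⟩
  map_fun' := fun {n} f x => Subtype.ext (h.map_fun f x)
  map_rel' := fun {n} r x hx => hx

theorem pullCopyToRange_strong {L : FirstOrder.Language.{v, w}} {A : Type u} {B : Type u}
    [L.Structure A] [L.Structure B] (h : A →[L] B) : IsStrongHom (pullCopyToRange h) :=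
  fun _n _r _x => Iff.rfl

theorem pullCopyToRange_surjective {L : FirstOrder.Language.{v, w}} {A : Type u}
    {B : Type u} [L.Structure A] [L.Structure B] (h : A →[L] B) :
    Function.Surjective (pullCopyToRange h) := by
  rintro ⟨b, a, rfl⟩
  exact ⟨a, rfl⟩

/-- A first-order sentence (over a language with only relation and
constant symbols) has a spoiler iff it has an injective spoiler or a strong surjective
spoiler. -/
theorem hasSpoiler_iff_injective_or_strongSurjective
    (L : FirstOrder.Language.{v, w}) (hL : ∀ n : ℕ, IsEmpty (L.Functions (n + 1)))
    (Φ : L.Sentence) :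
    HasSpoiler.{u, v, w} L Φ ↔
      HasInjectiveSpoiler.{u, v, w} L Φ ∨ HasStrongSurjectiveSpoiler.{u, v, w} L Φ := by
  constructor
  · rintro ⟨A, iA, nA, B, iB, nB, hA, hB, ⟨h⟩⟩
    have nR : Nonempty (↥h.range) := ⟨⟨h nA.some, nA.some, rfl⟩⟩
    by_cases hrange : (↥h.range) ⊨ Φ
    · -- injective spoiler: inclusion of range into B
      exact Or.inl ⟨↥h.range, inferInstance, nR, B, iB, nB, hrange, hB,
        h.range.subtype.toHom, Subtype.coe_injective⟩
    · by_cases hpull : (PullCopy h) ⊨ Φ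
      · -- strong surjective spoiler: PullCopy h ↠ range h
        exact Or.inr ⟨PullCopy h, inferInstance, nA, ↥h.range, inferInstance, nR,
          hpull, hrange, pullCopyToRange h, pullCopyToRange_strong h,
          pullCopyToRange_surjective h⟩
      · -- injective spoiler: identity from A to PullCopy h
        exact Or.inl ⟨A, iA, nA, PullCopy h, inferInstance, nA, hA, hpull,
          toPullCopy h, fun a b hab => hab⟩
  · rintro (⟨A, iA, nA, B, iB, nB, hA, hB, f, _⟩ | ⟨A, iA, nA, B, iB, nB, hA, hB, f, _⟩) <;>
      exact ⟨A, iA, nA, B, iB, nB, hA, hB, ⟨f⟩⟩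
end

section
/- Let Φ be a first-order L-sentence. There exist finite structures 𝔄 ⊨ Φ and 𝔅 ⊭ Φ with a homomorphism from 𝔄 to 𝔅 (i.e., Φ has a finite spoiler, equivalently the class of finite models of Φ is not closed under homomorphisms with finite targets) if and only if Φ has a finite injective spoiler or Φ has a finite strong surjective spoiler. -/
open FirstOrder FirstOrder.Language

universe u v w

/-- `Φ` has a finite spoiler: a homomorphism from a finite model of `Φ` to a finite
non-model of `Φ`. -/
def HasFiniteSpoiler.{u', v', w'} (L : FirstOrder.Language.{v', w'}) (Φ : L.Sentence) :
    Prop :=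
  ∃ (A : Type u') (_ : L.Structure A) (_ : Nonempty A) (_ : Finite A)
    (B : Type u') (_ : L.Structure B) (_ : Nonempty B) (_ : Finite B),
    A ⊨ Φ ∧ ¬ B ⊨ Φ ∧ Nonempty (A →[L] B)

/-- `Φ` has a finite injective spoiler. -/
def HasFiniteInjectiveSpoiler.{u', v', w'} (L : FirstOrder.Language.{v', w'})
    (Φ : L.Sentence) : Prop :=
  ∃ (A : Type u') (_ : L.Structure A) (_ : Nonempty A) (_ : Finite A)
    (B : Type u') (_ : L.Structure B) (_ : Nonempty B) (_ : Finite B),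
    A ⊨ Φ ∧ ¬ B ⊨ Φ ∧ ∃ h : A →[L] B, Function.Injective h

/-- `Φ` has a finite strong surjective spoiler. -/
def HasFiniteStrongSurjectiveSpoiler.{u', v', w'} (L : FirstOrder.Language.{v', w'})
    (Φ : L.Sentence) : Prop :=
  ∃ (A : Type u') (_ : L.Structure A) (_ : Nonempty A) (_ : Finite A)
    (B : Type u') (_ : L.Structure B) (_ : Nonempty B) (_ : Finite B),
    A ⊨ Φ ∧ ¬ B ⊨ Φ ∧ ∃ h : A →[L] B, IsStrongHom h ∧ Function.Surjective h

section Aux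

variable {L : FirstOrder.Language.{v, w}} {A B : Type u}
  [iA : L.Structure A] [iB : L.Structure B]

/-- Pullback structure on `A ⊕ B` along `Sum.elim h id`. -/
noncomputable def sumStructure (hL : ∀ n : ℕ, IsEmpty (L.Functions (n + 1)))
    (h : A →[L] B) : L.Structure (A ⊕ B) where
  funMap {n} f x :=
    match n, f, x with
    | 0, f, _ => Sum.inl (Structure.funMap f (fun i => i.elim0))
    | n + 1, f, _ => ((hL n).elim f)
  RelMap {n} r x := Structure.RelMap r (Sum.elim (⇑h) id ∘ x)

/-- The projection `A ⊕ B → B` as a homomorphism w.r.t. the pullback structure. -/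
noncomputable def sumProj (hL : ∀ n : ℕ, IsEmpty (L.Functions (n + 1)))
    (h : A →[L] B) :
    letI := sumStructure hL h
    (A ⊕ B) →[L] B :=
  letI := sumStructure hL h
  { toFun := Sum.elim (⇑h) id
    map_fun' := by
      intro n f x
      match n, f with
      | 0, f =>
        show Sum.elim (⇑h) id (Sum.inl (Structure.funMap f _)) = _
        simp only [Sum.elim_inl]
        rw [h.map_fun]
        exact congrArg _ (Subsingleton.elim _ _)
      | n + 1, f => exact ((hL n).elim f)
    map_rel' := fun r x hr => hr }

/-- The inclusion `A → A ⊕ B` as a homomorphism w.r.t. the pullback structure. -/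
noncomputable def sumIncl (hL : ∀ n : ℕ, IsEmpty (L.Functions (n + 1)))
    (h : A →[L] B) :
    letI := sumStructure hL h
    A →[L] (A ⊕ B) :=
  letI := sumStructure hL h
  { toFun := Sum.inl
    map_fun' := by
      intro n f x
      match n, f with
      | 0, f =>
        show Sum.inl (Structure.funMap f x) = Sum.inl (Structure.funMap f _)
        exact congrArg _ (congrArg _ (Subsingleton.elim _ _))
      | n + 1, f => exact ((hL n).elim f)
    map_rel' := by
      intro n r x hr
      show Structure.RelMap r (Sum.elim (⇑h) id ∘ (Sum.inl ∘ x))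
      have : Sum.elim (⇑h) id ∘ (Sum.inl ∘ x) = ⇑h ∘ x := rfl
      rw [this]
      exact h.map_rel r x hr }

end Aux

/-- A first-order sentence (over a language with only relation and
constant symbols) has a finite spoiler iff it has a finite injective spoiler or a finite
strong surjective spoiler. -/
theorem hasFiniteSpoiler_iff_injective_or_strongSurjective
    (L : FirstOrder.Language.{v, w}) (hL : ∀ n : ℕ, IsEmpty (L.Functions (n + 1)))
    (Φ : L.Sentence) :
    HasFiniteSpoiler.{u, v, w} L Φ ↔
      HasFiniteInjectiveSpoiler.{u, v, w} L Φ ∨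
        HasFiniteStrongSurjectiveSpoiler.{u, v, w} L Φ := by
  constructor
  · rintro ⟨A, iA, nA, fA, B, iB, nB, fB, hA, hB, ⟨h⟩⟩
    classical
    letI sC : L.Structure (A ⊕ B) := sumStructure hL h
    by_cases hC : (A ⊕ B) ⊨ Φ
    · exact Or.inr ⟨A ⊕ B, sC, ⟨Sum.inr nB.some⟩, inferInstance, B, iB, nB, fB, hC, hB,
        sumProj hL h, fun _ r x => Iff.rfl, fun b => ⟨Sum.inr b, rfl⟩⟩
    · exact Or.inl ⟨A, iA, nA, fA, A ⊕ B, sC, ⟨Sum.inr nB.some⟩, inferInstance, hA, hC,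
        sumIncl hL h, Sum.inl_injective⟩
  · rintro (⟨A, iA, nA, fA, B, iB, nB, fB, hA, hB, h, _⟩ |
      ⟨A, iA, nA, fA, B, iB, nB, fB, hA, hB, h, _⟩) <;>
      exact ⟨A, iA, nA, fA, B, iB, nB, fB, hA, hB, ⟨h⟩⟩
end

section
/- Let 𝔄₀ and 𝔅 be finite L-structures and h : 𝔄₀ → 𝔅 a strong surjective homomorphism. Then there exist m ∈ ℕ, finite L-structures 𝔄₁, …, 𝔄ₘ, monomerges hᵢ : 𝔄ᵢ₋₁ → 𝔄ᵢ for 1 ≤ i ≤ m, and an isomorphism g : 𝔄ₘ → 𝔅 such that h = g ∘ hₘ ∘ ⋯ ∘ h₁. -/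
open FirstOrder FirstOrder.Language

universe u v w

/-- A *monomerge* is a strong surjective homomorphism such that exactly one element of the
codomain has a two-element preimage and every other element has a one-element preimage. -/
def IsMonomerge {L : FirstOrder.Language.{v, w}} {M : Type*} {N : Type*}
    [L.Structure M] [L.Structure N] (h : M →[L] N) : Prop :=
  IsStrongHom h ∧ Function.Surjective h ∧
    ∃ b : N, (⇑h ⁻¹' {b}).ncard = 2 ∧ ∀ b' : N, b' ≠ b → (⇑h ⁻¹' {b'}).ncard = 1

/-- `MonomergeFactorization L m A B SA SB f` says that the map `f : A → B` can be written
as `g ∘ hₘ ∘ ⋯ ∘ h₁` for monomerges `h₁, …, hₘ` between finite nonempty `L`-structures and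
an isomorphism `g`. -/
def MonomergeFactorization (L : FirstOrder.Language.{v, w}) :
    ℕ → ∀ (A B : Type u), L.Structure A → L.Structure B → (A → B) → Prop
  | 0, A, B, SA, SB, f => ∃ g : A ≃[L] B, ∀ a : A, f a = g a
  | m + 1, A, B, SA, SB, f =>
      ∃ (C : Type u) (SC : L.Structure C) (_ : Nonempty C) (_ : Finite C)
        (h₁ : A →[L] C) (f' : C → B),
        IsMonomerge h₁ ∧ (∀ a : A, f a = f' (h₁ a)) ∧
          MonomergeFactorization L m C B SC SB f'

section Aux

open Classical in
/-- The merge map sending `a'` to `a` and everything else to itself. -/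
noncomputable def mergeMap {M : Type u} (a a' : M) (hne : a ≠ a') (x : M) :
    {y : M // y ≠ a'} :=
  if hx : x = a' then ⟨a, hne⟩ else ⟨x, hx⟩

/-- The structure on the merged type, with relations pulled back from `N` along `h ∘ val`. -/
noncomputable def mergeStruct {L : FirstOrder.Language.{v, w}} {M N : Type u}
    [SM : L.Structure M] [SN : L.Structure N] (h : M → N) (a a' : M) (hne : a ≠ a') :
    L.Structure {y : M // y ≠ a'} where
  funMap f v := mergeMap a a' hne (Structure.funMap f (Subtype.val ∘ v))
  RelMap r v := Structure.RelMap r (h ∘ Subtype.val ∘ v)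

lemma h_val_merge {M N : Type u} (h : M → N) (a a' : M) (hne : a ≠ a') (hh : h a = h a')
    (x : M) : h (mergeMap a a' hne x).val = h x := by
  rw [mergeMap]
  split
  · next hx => rw [hx]; exact hh
  · rfl

lemma mergeMap_self {M : Type u} (a a' : M) (hne : a ≠ a') (x : M) (hx : x ≠ a') :
    mergeMap a a' hne x = ⟨x, hx⟩ := by
  rw [mergeMap, dif_neg hx]

lemma mergeMap_eq_iff {M : Type u} (a a' : M) (hne : a ≠ a') (x : M)
    (c : {y : M // y ≠ a'}) : mergeMap a a' hne x = c ↔ (x = c.val ∨ (x = a' ∧ c.val = a)) := by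
  rw [mergeMap]
  split
  · next hx =>
    subst hx
    constructor
    · intro hc; right; exact ⟨rfl, by rw [← hc]⟩
    · rintro (hc | ⟨-, hc⟩)
      · exact absurd hc.symm c.2
      · exact Subtype.ext hc.symm
  · next hx =>
    constructor
    · intro hc; left; rw [← hc]
    · rintro (hc | ⟨hc, -⟩)
      · exact Subtype.ext hc
      · exact absurd hc hx

theorem key_lemma (L : FirstOrder.Language.{v, w})
    (hL : ∀ n : ℕ, IsEmpty (L.Functions (n + 1))) :
    ∀ (k : ℕ) (M N : Type u) (SM : L.Structure M) (SN : L.Structure N),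
      Nonempty M → Finite M → Finite N →
      ∀ (h : M →[L] N), IsStrongHom h → Function.Surjective h → Nat.card M ≤ k →
      ∃ m : ℕ, MonomergeFactorization L m M N SM SN ⇑h := by
  intro k
  induction k with
  | zero =>
    intro M N SM SN hM hFM hFN h hst hsurj hcard
    have : 0 < Nat.card M := Nat.card_pos
    omega
  | succ k ih =>
    intro M N SM SN hM hFM hFN h hst hsurj hcard
    by_cases hinj : Function.Injective h
    · refine ⟨0, ⟨⟨Equiv.ofBijective h ⟨hinj, hsurj⟩, ?_, ?_⟩, fun a => rfl⟩⟩
      · intro n f x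
        exact h.map_fun f x
      · intro n r x
        exact hst r x
    · rw [Function.not_injective_iff] at hinj
      obtain ⟨a, a', hha, hne⟩ := hinj
      letI SC : L.Structure {y : M // y ≠ a'} := mergeStruct (⇑h) a a' hne
      have hvm : ∀ x : M, h (mergeMap a a' hne x).val = h x :=
        h_val_merge (⇑h) a a' hne hha
      -- the monomerge h₁ : M → C
      refine
        let h₁ : M →[L] {y : M // y ≠ a'} :=
          { toFun := mergeMap a a' hne
            map_fun' := ?_
            map_rel' := ?_ }
        ?_
      · intro n f x
        cases n with
        | zero =>
          show _ = mergeMap a a' hne (Structure.funMap f (Subtype.val ∘ _))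
          congr 2
          ext i
          exact i.elim0
        | succ n => exact (hL n).elim f
      · intro n r x hx
        show Structure.RelMap r (⇑h ∘ Subtype.val ∘ (mergeMap a a' hne ∘ x))
        have hx' : (⇑h ∘ Subtype.val ∘ (mergeMap a a' hne ∘ x)) = ⇑h ∘ x :=
          funext fun i => hvm (x i)
        rw [hx']
        exact (hst r x).mpr hx
      -- the residual map f' : C → N
      refine
        let f' : {y : M // y ≠ a'} →[L] N :=
          { toFun := fun c => h c.val
            map_fun' := ?_
            map_rel' := ?_ }
        ?_
      · intro n f v
        show h (mergeMap a a' hne (Structure.funMap f (Subtype.val ∘ v))).val = _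
        rw [hvm, h.map_fun]
        rfl
      · intro n r v hv
        exact hv
      have hf'st : IsStrongHom f' := by
        intro n r x
        exact Iff.rfl
      have hf'surj : Function.Surjective ⇑f' := by
        intro y
        obtain ⟨x, hx⟩ := hsurj y
        exact ⟨mergeMap a a' hne x, by show h _ = y; rw [hvm]; exact hx⟩
      have hlt : Nat.card {y : M // y ≠ a'} ≤ k := by
        have h2 : Nat.card {y : M // y ≠ a'} < Nat.card M :=
          Finite.card_subtype_lt (x := a') (by simp)
        omega
      obtain ⟨m, hm⟩ := ih {y : M // y ≠ a'} N SC SN ⟨⟨a, hne⟩⟩ inferInstance hFN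
        f' hf'st hf'surj hlt
      refine ⟨m + 1, {y : M // y ≠ a'}, SC, ⟨⟨a, hne⟩⟩, inferInstance, h₁, ⇑f',
        ⟨?_, ?_, ⟨a, hne⟩, ?_, ?_⟩, fun x => (hvm x).symm, hm⟩
      · -- h₁ is strong
        intro n r x
        show Structure.RelMap r (⇑h ∘ Subtype.val ∘ (⇑h₁ ∘ x)) ↔ _
        have hx' : (⇑h ∘ Subtype.val ∘ (⇑h₁ ∘ x)) = ⇑h ∘ x := funext fun i => hvm (x i)
        rw [hx']
        exact hst r x
      · -- h₁ is surjective
        rintro ⟨c, hc⟩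
        exact ⟨c, mergeMap_self a a' hne c hc⟩
      · -- preimage of ⟨a, hne⟩ has two elements
        have hset : ⇑h₁ ⁻¹' {⟨a, hne⟩} = {a, a'} := by
          ext x
          simp only [Set.mem_preimage, Set.mem_singleton_iff, Set.mem_insert_iff]
          rw [show (h₁ x = ⟨a, hne⟩) = (mergeMap a a' hne x = ⟨a, hne⟩) from rfl,
            mergeMap_eq_iff]
          constructor
          · rintro (hx | ⟨hx, -⟩)
            · left; exact hx
            · right; exact hx
          · rintro (hx | hx)
            · left; exact hx
            · right; exact ⟨hx, rfl⟩
        rw [hset]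
        exact Set.ncard_pair hne
      · -- other preimages are singletons
        rintro ⟨c, hc⟩ hbc
        have hca : c ≠ a := fun hca => hbc (Subtype.ext hca)
        have hset : ⇑h₁ ⁻¹' {⟨c, hc⟩} = {c} := by
          ext x
          simp only [Set.mem_preimage, Set.mem_singleton_iff]
          rw [show (h₁ x = ⟨c, hc⟩) = (mergeMap a a' hne x = ⟨c, hc⟩) from rfl,
            mergeMap_eq_iff]
          constructor
          · rintro (hx | ⟨-, hx⟩)
            · exact hx
            · exact absurd hx hca
          · intro hx; left; exact hx
        rw [hset]
        exact Set.ncard_singleton c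

end Aux

/-- Every strong surjective homomorphism between finite (nonempty)
structures over a language with only relation and constant symbols factors, up to a final
isomorphism, as a composition of finitely many monomerges. -/
theorem strong_surjective_hom_factors_through_monomerges
    (L : FirstOrder.Language.{v, w}) (hL : ∀ n : ℕ, IsEmpty (L.Functions (n + 1)))
    (M N : Type u) [SM : L.Structure M] [SN : L.Structure N]
    [Nonempty M] [Nonempty N] [Finite M] [Finite N]
    (h : M →[L] N) (hst : IsStrongHom h) (hsurj : Function.Surjective h) :
    ∃ m : ℕ, MonomergeFactorization L m M N SM SN ⇑h := by
  exact key_lemma L hL (Nat.card M) M N SM SN ‹_› ‹_› ‹_› h hst hsurj le_rfl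
end

section
/- Let Φ be a first-order L-sentence. If Φ has a finite strong surjective spoiler, then Φ has a finite monomerge spoiler. Consequently, whenever Φ has any finite spoiler, Φ has a finite injective spoiler or a finite monomerge spoiler. -/
open FirstOrder FirstOrder.Language

universe u v w

/-- `Φ` has a finite monomerge spoiler. -/
def HasFiniteMonomergeSpoiler.{u', v', w'} (L : FirstOrder.Language.{v', w'})
    (Φ : L.Sentence) : Prop :=
  ∃ (A : Type u') (_ : L.Structure A) (_ : Nonempty A) (_ : Finite A)
    (B : Type u') (_ : L.Structure B) (_ : Nonempty B) (_ : Finite B),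
    A ⊨ Φ ∧ ¬ B ⊨ Φ ∧ ∃ h : A →[L] B, IsMonomerge h
section MyAux

variable {L : FirstOrder.Language.{v, w}}

private lemma myFin0_eq {α : Sort*} (x y : Fin 0 → α) : x = y :=
  funext fun i => i.elim0

/-- Build a structure from constants and relations when `L` has no positive-arity
function symbols. -/
private def myMkStruct (hL : ∀ n : ℕ, IsEmpty (L.Functions (n + 1))) {A : Type*}
    (c : L.Constants → A) (rel : ∀ n, L.Relations n → (Fin n → A) → Prop) :
    L.Structure A where
  funMap {n} f _ :=
    match n, f with
    | 0, f => c f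
    | n + 1, f => ((hL n).false f).elim
  RelMap {n} r x := rel n r x

private lemma myRealize_iff_of_strong_bij {A B : Type*} [L.Structure A] [L.Structure B]
    (h : A →[L] B) (hs : IsStrongHom h) (hb : Function.Bijective h) (Φ : L.Sentence) :
    A ⊨ Φ ↔ B ⊨ Φ := by
  let e : A ≃[L] B :=
    { toEquiv := Equiv.ofBijective h hb
      map_fun' := fun f x => h.map_fun f x
      map_rel' := fun r x => hs r x }
  exact StrongHomClass.realize_sentence e Φ

/-- Core induction: a finite strong surjective spoiler with domain of size `≤ n`
yields a finite monomerge spoiler. -/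
private lemma myCore (L : FirstOrder.Language.{v, w})
    (hL : ∀ n : ℕ, IsEmpty (L.Functions (n + 1))) (Φ : L.Sentence) : ∀ (n : ℕ)
    (A : Type u) [SA : L.Structure A] [Nonempty A] [Finite A]
    (B : Type u) [SB : L.Structure B] [Nonempty B] [Finite B],
    Nat.card A ≤ n → A ⊨ Φ → ¬ B ⊨ Φ →
    ∀ h : A →[L] B, IsStrongHom h → Function.Surjective h →
    HasFiniteMonomergeSpoiler.{u, v, w} L Φ := by
  intro n
  induction n with
  | zero =>
    intro A SA nA fA B SB nB fB hcard
    haveI := nA; haveI := fA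
    exact absurd (Nat.le_zero.1 hcard) (Nat.card_pos (α := A)).ne'
  | succ n ih =>
    intro A SA nA fA B SB nB fB hcard hA hB h hstrong hsurj
    classical
    haveI := nA; haveI := fA; haveI := nB; haveI := fB
    by_cases hinj : Function.Injective h
    · exact absurd ((myRealize_iff_of_strong_bij h hstrong ⟨hinj, hsurj⟩ Φ).1 hA) hB
    · -- find two elements identified by `h`
      simp only [Function.Injective, not_forall] at hinj
      obtain ⟨a1, a2, heq, hne⟩ := hinj
      -- the merged structure
      set A' := {x : A // x ≠ a1} with hA'
      have hmem : ∀ a : A, a ≠ a1 → a ∈ {x : A | x ≠ a1} := fun a ha => ha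
      let m : A → A' := fun a => if ha : a = a1 then ⟨a2, Ne.symm hne⟩ else ⟨a, ha⟩
      have hm1 : m a1 = ⟨a2, Ne.symm hne⟩ := dif_pos rfl
      have hmne : ∀ (a : A) (ha : a ≠ a1), m a = ⟨a, ha⟩ := fun a ha => dif_neg ha
      have hvm : ∀ a : A, h (m a).val = h a := by
        intro a
        by_cases ha : a = a1
        · subst ha; rw [hm1]; exact heq.symm
        · rw [hmne a ha]
      letI SA' : L.Structure A' :=
        myMkStruct hL (fun c => m (Structure.funMap c (fun i => i.elim0)))
          (fun n r y => Structure.RelMap r (fun i => (y i).val))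
      have relA' : ∀ {k : ℕ} (r : L.Relations k) (y : Fin k → A'),
          Structure.RelMap r y ↔ Structure.RelMap r (fun i => (y i).val) := by
        intro k r y; exact Iff.rfl
      -- key iff for merging
      have hkey : ∀ {k : ℕ} (r : L.Relations k) (x : Fin k → A),
          Structure.RelMap r (fun i => (m (x i)).val) ↔ Structure.RelMap r x := by
        intro k r x
        have h1 := hstrong r (fun i => (m (x i)).val)
        have h2 := hstrong r x
        have h3 : (⇑h ∘ fun i => (m (x i)).val) = ⇑h ∘ x := by
          funext i; exact hvm (x i)
        rw [← h1, h3, h2]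
      -- the merge homomorphism
      let mh : A →[L] A' :=
        { toFun := m
          map_fun' := by
            intro k f x
            cases k with
            | zero =>
              show m _ = m _
              exact congrArg m (congrArg _ (myFin0_eq _ _))
            | succ k => exact ((hL k).false f).elim
          map_rel' := by
            intro k r x hr
            exact (relA' r (m ∘ x)).2 ((hkey r x).2 hr) }
      have mh_strong : IsStrongHom mh := by
        intro k r x
        exact (relA' r (m ∘ x)).trans (hkey r x)
      have mh_surj : Function.Surjective mh := by
        rintro ⟨a, ha⟩
        exact ⟨a, hmne a ha⟩
      -- the residual homomorphism
      let h' : A' →[L] B :=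
        { toFun := fun y => h y.val
          map_fun' := by
            intro k f x
            cases k with
            | zero =>
              show h (m _).val = _
              rw [hvm, h.map_fun]
              exact congrArg _ (myFin0_eq _ _)
            | succ k => exact ((hL k).false f).elim
          map_rel' := by
            intro k r y hr
            exact h.map_rel r (fun i => (y i).val) ((relA' r y).1 hr) }
      have h'_strong : IsStrongHom h' := by
        intro k r y
        exact (hstrong r (fun i => (y i).val)).trans (relA' r y).symm
      have h'_surj : Function.Surjective h' := by
        intro b
        obtain ⟨a, rfl⟩ := hsurj b
        exact ⟨m a, hvm a⟩
      haveI : Nonempty A' := ⟨⟨a2, Ne.symm hne⟩⟩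
      haveI : Finite A' := Subtype.finite
      by_cases hA'Φ : A' ⊨ Φ
      · -- recurse
        have hlt : Nat.card A' < Nat.card A := Finite.card_subtype_lt (x := a1) (by simp)
        exact ih A' B (by omega) hA'Φ hB h' h'_strong h'_surj
      · -- the merge map is a monomerge spoiler
        refine ⟨A, SA, nA, fA, A', SA', ‹_›, ‹_›, hA, hA'Φ, mh, mh_strong, mh_surj,
          ⟨a2, Ne.symm hne⟩, ?_, ?_⟩
        · have : (⇑mh ⁻¹' {⟨a2, Ne.symm hne⟩}) = {a1, a2} := by
            ext a
            simp only [Set.mem_preimage, Set.mem_singleton_iff, Set.mem_insert_iff]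
            constructor
            · intro hma
              by_cases ha : a = a1
              · exact Or.inl ha
              · refine Or.inr ?_
                have := (hmne a ha).symm.trans hma
                exact congrArg Subtype.val this
            · rintro (h1 | h2)
              · rw [h1]; exact hm1
              · rw [h2]; exact hmne a2 (Ne.symm hne)
          rw [this]
          exact Set.ncard_pair hne
        · rintro ⟨b, hb⟩ hbne
          have : (⇑mh ⁻¹' {⟨b, hb⟩}) = {b} := by
            ext a
            simp only [Set.mem_preimage, Set.mem_singleton_iff]
            constructor
            · intro hma
              by_cases ha : a = a1
              · subst ha
                exact absurd (hm1.symm.trans hma).symm hbne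
              · have := (hmne a ha).symm.trans hma
                exact congrArg Subtype.val this
            · intro h2
              rw [h2]; exact hmne b hb
          rw [this]
          exact Set.ncard_singleton b

private def MyCopy (A : Type u') : Type u' := A

end MyAux

/-- If a first-order sentence (over a language with only relation and
constant symbols) has a finite strong surjective spoiler, then it has a finite monomerge
spoiler; consequently, if it has any finite spoiler, then it has a finite injective
spoiler or a finite monomerge spoiler. -/
theorem finite_spoiler_monomerge
    (L : FirstOrder.Language.{v, w}) (hL : ∀ n : ℕ, IsEmpty (L.Functions (n + 1)))
    (Φ : L.Sentence) :
    (HasFiniteStrongSurjectiveSpoiler.{u, v, w} L Φ →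
        HasFiniteMonomergeSpoiler.{u, v, w} L Φ) ∧
    (HasFiniteSpoiler.{u, v, w} L Φ →
        HasFiniteInjectiveSpoiler.{u, v, w} L Φ ∨
          HasFiniteMonomergeSpoiler.{u, v, w} L Φ) := by
  have part1 : HasFiniteStrongSurjectiveSpoiler.{u, v, w} L Φ →
      HasFiniteMonomergeSpoiler.{u, v, w} L Φ := by
    rintro ⟨A, SA, nA, fA, B, SB, nB, fB, hA, hB, h, hs, hsurj⟩
    letI := SA; haveI := nA; haveI := fA; letI := SB; haveI := nB; haveI := fB
    exact myCore L hL Φ (Nat.card A) A B le_rfl hA hB h hs hsurj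
  refine ⟨part1, ?_⟩
  rintro ⟨A, SA, nA, fA, B, SB, nB, fB, hA, hB, ⟨h⟩⟩
  letI := SA; haveI := nA; haveI := fA; letI := SB; haveI := nB; haveI := fB
  -- the pullback structure on a copy of `A`
  letI Sstar : L.Structure (MyCopy A) :=
    myMkStruct hL (fun c => (Structure.funMap c (fun i => i.elim0) : A))
      (fun n r x => Structure.RelMap r (fun i => h (x i)))
  have relStar : ∀ {k : ℕ} (r : L.Relations k) (x : Fin k → MyCopy A),
      Structure.RelMap r x ↔ Structure.RelMap r (fun i => h (x i)) :=
    fun r x => Iff.rfl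
  let idHom : A →[L] MyCopy A :=
    { toFun := fun a => (a : MyCopy A)
      map_fun' := by
        intro k f x
        cases k with
        | zero => exact congrArg _ (myFin0_eq _ _)
        | succ k => exact ((hL k).false f).elim
      map_rel' := by
        intro k r x hr
        exact h.map_rel r x hr }
  by_cases hstar : (MyCopy A) ⊨ Φ
  · -- the image substructure
    let C := {b : B // ∃ a : A, h a = b}
    have hcC : ∀ c : L.Constants,
        h (Structure.funMap c (fun i : Fin 0 => i.elim0) : A)
          = Structure.funMap c (fun i : Fin 0 => i.elim0) :=
      fun c => (h.map_fun c _).trans (congrArg _ (myFin0_eq _ _))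
    letI SC : L.Structure C :=
      myMkStruct hL
        (fun c => ⟨Structure.funMap c (fun i => i.elim0),
          Structure.funMap c (fun i => i.elim0), hcC c⟩)
        (fun n r y => Structure.RelMap r (fun i => (y i).val))
    haveI nC : Nonempty C := nA.elim fun a => ⟨⟨h a, a, rfl⟩⟩
    haveI fC : Finite C := Subtype.finite
    let surjHom : MyCopy A →[L] C :=
      { toFun := fun a => ⟨h a, a, rfl⟩
        map_fun' := by
          intro k f x
          cases k with
          | zero =>
            refine Subtype.ext ?_
            exact (h.map_fun f _).trans (congrArg _ (myFin0_eq _ _))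
          | succ k => exact ((hL k).false f).elim
        map_rel' := by
          intro k r x hr
          exact hr }
    let inclHom : C →[L] B :=
      { toFun := Subtype.val
        map_fun' := by
          intro k f x
          cases k with
          | zero => exact congrArg _ (myFin0_eq _ _)
          | succ k => exact ((hL k).false f).elim
        map_rel' := by
          intro k r y hr
          exact hr }
    by_cases hC : C ⊨ Φ
    · exact Or.inl ⟨C, SC, nC, fC, B, SB, nB, fB, hC, hB, inclHom, Subtype.val_injective⟩
    · refine Or.inr (part1 ⟨MyCopy A, Sstar, nA, fA, C, SC, nC, fC, hstar, hC,
        surjHom, ?_, ?_⟩)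
      · intro k r x
        exact Iff.rfl
      · rintro ⟨b, a, rfl⟩
        exact ⟨a, rfl⟩
  · exact Or.inl ⟨A, SA, nA, fA, MyCopy A, Sstar, nA, fA, hA, hstar, idHom,
      fun x y hxy => hxy⟩
end

section
/- Let L ⊆ L′ ⊆ L″ be first-order languages such that L′ extends L by relation symbols only (no new constant symbols). Let Φ be an L-sentence, Φ′ an L′-sentence, and Ψ an L″-sentence such that: (a) an L-structure is a model of Φ if and only if it admits an L′-expansion that is a model of Φ′; and (b) an L′-structure belongs to homcl(Mod(Φ′)) if and only if it admits an L″-expansion that is a model of Ψ. Then an L-structure belongs to homcl(Mod(Φ)) if and only if it admits an L″-expansion that is a model of Ψ. -/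
open FirstOrder FirstOrder.Language

universe u v w

/-- projective normal form sufficiency. Let `L′ = L ⊕ Lr` extend `L` by
relation symbols only, and `L″ = L′ ⊕ L2` extend `L′` further. Suppose `Φ` (over `L`) is
projectively characterized by `Φ′` (over `L′`), and the homomorphism closure of the models
of `Φ′` is projectively characterized by `Ψ` (over `L″`). Then the homomorphism closure
of the models of `Φ` is projectively characterized by `Ψ` as well. -/
theorem homclosure_projective_characterization_transfer
    (L Lr L2 : FirstOrder.Language.{v, w})
    (hL : ∀ n : ℕ, IsEmpty (L.Functions (n + 1)))
    (hLr : Lr.IsRelational)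
    (Φ : L.Sentence) (Φ' : (L.sum Lr).Sentence) (Ψ : ((L.sum Lr).sum L2).Sentence)
    -- (a) an `L`-structure models `Φ` iff it admits an `L′`-expansion modelling `Φ′`
    (ha : ∀ (M : Type u) (SM : L.Structure M), Nonempty M →
      (M ⊨ Φ ↔ ∃ S' : (L.sum Lr).Structure M,
        (LHom.sumInl : L →ᴸ L.sum Lr).IsExpansionOn M ∧ M ⊨ Φ'))
    -- (b) an `L′`-structure lies in `homcl (Mod Φ′)` iff it admits an `L″`-expansion
    -- modelling `Ψ`
    (hb : ∀ (M : Type u) (SM' : (L.sum Lr).Structure M), Nonempty M →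
      ((∃ (A : Type u) (_ : (L.sum Lr).Structure A) (_ : Nonempty A),
          A ⊨ Φ' ∧ Nonempty (A →[L.sum Lr] M)) ↔
        ∃ S'' : ((L.sum Lr).sum L2).Structure M,
          (LHom.sumInl : L.sum Lr →ᴸ (L.sum Lr).sum L2).IsExpansionOn M ∧ M ⊨ Ψ)) :
    -- conclusion: an `L`-structure lies in `homcl (Mod Φ)` iff it admits an
    -- `L″`-expansion modelling `Ψ`
    ∀ (M : Type u) (SM : L.Structure M), Nonempty M →
      ((∃ (A : Type u) (_ : L.Structure A) (_ : Nonempty A),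
          A ⊨ Φ ∧ Nonempty (A →[L] M)) ↔
        ∃ S'' : ((L.sum Lr).sum L2).Structure M,
          ((LHom.sumInl : L.sum Lr →ᴸ (L.sum Lr).sum L2).comp
              (LHom.sumInl : L →ᴸ L.sum Lr)).IsExpansionOn M ∧ M ⊨ Ψ) := by
  intro M SM hM
  constructor
  · rintro ⟨A, SA, hA, hΦ, ⟨h⟩⟩
    obtain ⟨S', hexp, hΦ'⟩ := (ha A SA hA).mp hΦ
    -- trivial `Lr`-structure on `M`: all relations hold
    letI SMr : Lr.Structure M := ⟨fun {n} f _ => (hLr n).elim f, fun _ _ => True⟩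
    letI SM' : (L.sum Lr).Structure M := Language.sumStructure L Lr M
    -- promote `h` to an `L ⊕ Lr` homomorphism
    let h' : A →[L.sum Lr] M :=
      { toFun := h
        map_fun' := by
          rintro n (f | f) x
          · have h1 : Structure.funMap (L := L.sum Lr) (M := A) (Sum.inl f) x = Structure.funMap f x :=
              hexp.map_onFunction f x
            have h2 : Structure.funMap (L := L.sum Lr) (M := M) (Sum.inl f) (h ∘ x)
                = Structure.funMap f (h ∘ x) := rfl
            rw [h1, h2]
            exact h.map_fun f x
          · exact ((hLr n).elim f)
        map_rel' := by
          rintro n (r | r) x hr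
          · have h1 : Structure.RelMap (L := L.sum Lr) (M := A) (Sum.inl r) x = Structure.RelMap r x :=
              hexp.map_onRelation r x
            have h2 : Structure.RelMap (L := L.sum Lr) (M := M) (Sum.inl r) (h ∘ x)
                = Structure.RelMap r (h ∘ x) := rfl
            rw [h1] at hr
            rw [h2]
            exact h.map_rel r x hr
          · exact trivial }
    obtain ⟨S'', hexp'', hΨ⟩ := (hb M SM' hM).mp ⟨A, S', hA, hΦ', ⟨h'⟩⟩
    refine ⟨S'', ⟨?_, ?_⟩, hΨ⟩
    · intro n f x
      have h1 : Structure.funMap (L := (L.sum Lr).sum L2) (M := M) (Sum.inl (Sum.inl f)) x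
          = Structure.funMap (L := L.sum Lr) (M := M) (Sum.inl f) x := hexp''.map_onFunction (Sum.inl f) x
      exact h1
    · intro n r x
      exact hexp''.map_onRelation (Sum.inl r) x
  · rintro ⟨S'', hexp, hΨ⟩
    letI := S''
    letI SM' : (L.sum Lr).Structure M :=
      (LHom.sumInl : L.sum Lr →ᴸ (L.sum Lr).sum L2).reduct M
    obtain ⟨A, SA', hA, hΦ', ⟨h'⟩⟩ :=
      (hb M SM' hM).mpr ⟨S'', LHom.isExpansionOn_reduct _ M, hΨ⟩
    letI SA : L.Structure A := (LHom.sumInl : L →ᴸ L.sum Lr).reduct A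
    have hΦA : A ⊨ Φ := (ha A SA hA).mpr ⟨SA', LHom.isExpansionOn_reduct _ A, hΦ'⟩
    refine ⟨A, SA, hA, hΦA, ⟨{ toFun := h', map_fun' := ?_, map_rel' := ?_ }⟩⟩
    · intro n f x
      have h1 : Structure.funMap (L := L) (M := A) f x
          = Structure.funMap (L := L.sum Lr) (M := A) (Sum.inl f) x := rfl
      have h2 : Structure.funMap (L := L.sum Lr) (M := M) (Sum.inl f) (h' ∘ x)
          = Structure.funMap (L := L) (M := M) f (h' ∘ x) := hexp.map_onFunction f (h' ∘ x)
      rw [h1, ← h2]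
      exact h'.map_fun (Sum.inl f) x
    · intro n r x hr
      have h2 : Structure.RelMap (L := L.sum Lr) (M := M) (Sum.inl r) (h' ∘ x)
          = Structure.RelMap (L := L) (M := M) r (h' ∘ x) := hexp.map_onRelation r (h' ∘ x)
      rw [← h2]
      exact h'.map_rel (Sum.inl r) x hr
end

section
/- Let L be a first-order language with equality whose function symbols are all constants (no function symbols of positive arity), with c constant symbols, and let Φ be an L-sentence of the form ∃x₁…∃x_m ∀y₁…∀y_n φ with φ quantifier-free. Then every (nonempty) model 𝔄 of Φ has a finite substructure 𝔄′ that is again a model of Φ, where 𝔄′ contains the interpretations of all constant symbols and has at most max(1, m + c) elements; in particular the inclusion is a homomorphism 𝔄′ → 𝔄. -/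
open FirstOrder FirstOrder.Language

universe u v w

/-- Universally quantify the last `n` bound variables of a bounded formula. -/
def BoundedFormula.allsAbove {L : FirstOrder.Language.{v, w}} {α : Type*} {k : ℕ} :
    ∀ {n : ℕ}, L.BoundedFormula α (k + n) → L.BoundedFormula α k
  | 0, φ => φ
  | _ + 1, φ => BoundedFormula.allsAbove φ.all

lemma ncard_range_le' {ι : Type*} {β : Type*} [Fintype ι] (f : ι → β) :
    (Set.range f).ncard ≤ Fintype.card ι := by
  classical
  rw [← Set.image_univ, ← Finset.coe_univ, ← Finset.coe_image, Set.ncard_coe_finset]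
  exact Finset.card_image_le.trans (le_of_eq Finset.card_univ)

lemma realize_allsAbove {L : FirstOrder.Language.{v, w}} {M : Type*} [L.Structure M]
    {α : Type*} {k : ℕ} :
    ∀ {n : ℕ} (φ : L.BoundedFormula α (k + n)) (v : α → M) (xs : Fin k → M),
      (BoundedFormula.allsAbove φ).Realize v xs ↔
        ∀ ys : Fin n → M, φ.Realize v (Fin.append xs ys)
  | 0, φ, v, xs => by
    rw [BoundedFormula.allsAbove]
    constructor
    · intro h ys
      have : ys = Fin.elim0 := funext fun i => i.elim0
      subst this
      rw [Fin.append_elim0]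
      convert h
      · rfl
      · rfl
    · intro h
      have := h Fin.elim0
      rwa [Fin.append_elim0] at this
  | n + 1, φ, v, xs => by
    rw [BoundedFormula.allsAbove, realize_allsAbove φ.all v xs]
    constructor
    · intro h ys
      have h2 := BoundedFormula.realize_all.mp (h (Fin.init ys)) (ys (Fin.last n))
      rwa [← Fin.append_snoc, Fin.snoc_init_self] at h2
    · intro h ys
      rw [BoundedFormula.realize_all]
      intro a
      have := h (Fin.snoc ys a)
      rwa [Fin.append_snoc] at this

/-- Small-model property for Bernays–Schönfinkel sentences: every
(nonempty) model `𝔄` of `∃x₁…∃x_m ∀y₁…∀y_n φ` (with `φ` quantifier-free, over a language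
with only relation and constant symbols, with `c` constant symbols) has a finite
substructure `𝔄′` with at most `max 1 (m + c)` elements which contains all constants and
is again a model; the inclusion of `𝔄′` into `𝔄` is a homomorphism. -/
theorem bernaysSchoenfinkel_small_submodel
    (L : FirstOrder.Language.{v, w})
    (hL : ∀ n : ℕ, IsEmpty (L.Functions (n + 1)))
    [Fintype L.Constants]
    (m n : ℕ) (φ : L.BoundedFormula Empty (m + n)) (hφ : φ.IsQF)
    (A : Type u) (SA : L.Structure A) (hA : Nonempty A)
    (hmod : A ⊨ (BoundedFormula.allsAbove φ).exs) :
    ∃ S : L.Substructure A,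
      (S : Set A).Nonempty ∧
      (S : Set A).Finite ∧
      (S : Set A).ncard ≤ max 1 (m + Fintype.card L.Constants) ∧
      (∀ c : L.Constants, Structure.funMap c (fun i : Fin 0 => i.elim0) ∈ S) ∧
      (↥S) ⊨ (BoundedFormula.allsAbove φ).exs ∧
      ∃ h : (↥S) →[L] A, ∀ x : ↥S, h x = (x : A) := by
  obtain ⟨a0⟩ := hA
  rw [Sentence.Realize, BoundedFormula.realize_exs] at hmod
  obtain ⟨xs, hxs⟩ := hmod
  rw [realize_allsAbove] at hxs
  set cmap : L.Constants → A := fun c => Structure.funMap c (fun i : Fin 0 => i.elim0) with hcmap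
  set E : Set A := if m + Fintype.card L.Constants = 0 then {a0} else ∅ with hE
  set carrier : Set A := Set.range xs ∪ Set.range cmap ∪ E with hcarrier
  have hfin : carrier.Finite := by
    apply Set.Finite.union
    · exact (Set.finite_range xs).union (Set.finite_range cmap)
    · rw [hE]; split <;> simp
  have hS : ∀ {k : ℕ} (f : L.Functions k) (x : Fin k → A),
      (∀ i, x i ∈ carrier) → Structure.funMap f x ∈ carrier := by
    intro k f x _
    cases k with
    | zero =>
      have : Structure.funMap f x = cmap f := by
        rw [hcmap]; congr; funext i; exact i.elim0
      rw [this]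
      exact Or.inl (Or.inr ⟨f, rfl⟩)
    | succ k => exact ((hL k).elim f)
  refine ⟨⟨carrier, hS⟩, ?_, hfin, ?_, ?_, ?_, ?_⟩
  · by_cases hmc : m + Fintype.card L.Constants = 0
    · exact ⟨a0, Or.inr (by simp [hE, hmc])⟩
    · rcases Nat.eq_zero_or_pos m with hm | hm
      · have hc : 0 < Fintype.card L.Constants := by omega
        obtain ⟨c⟩ := Fintype.card_pos_iff.mp hc
        exact ⟨cmap c, Or.inl (Or.inr ⟨c, rfl⟩)⟩
      · exact ⟨xs ⟨0, hm⟩, Or.inl (Or.inl ⟨⟨0, hm⟩, rfl⟩)⟩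
  · -- ncard bound
    show carrier.ncard ≤ _
    by_cases hmc : m + Fintype.card L.Constants = 0
    · have hm : m = 0 := by omega
      have hc : IsEmpty L.Constants := Fintype.card_eq_zero_iff.mp (by omega)
      have : carrier = {a0} := by
        rw [hcarrier, hE, if_pos hmc]
        subst hm
        simp [Set.range_eq_empty]
      rw [this]
      simp
    · have : carrier = Set.range xs ∪ Set.range cmap := by
        rw [hcarrier, hE, if_neg hmc, Set.union_empty]
      rw [this]
      calc (Set.range xs ∪ Set.range cmap).ncard
          ≤ (Set.range xs).ncard + (Set.range cmap).ncard :=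
            Set.ncard_union_le _ _
        _ ≤ m + Fintype.card L.Constants := by
            gcongr
            · simpa using ncard_range_le' xs
            · simpa using ncard_range_le' cmap
        _ ≤ max 1 (m + Fintype.card L.Constants) := le_max_right _ _
  · intro c
    exact Or.inl (Or.inr ⟨c, rfl⟩)
  · -- model
    set S : L.Substructure A := ⟨carrier, hS⟩ with hSdef
    have hxsS : ∀ i, xs i ∈ S := fun i => Or.inl (Or.inl ⟨i, rfl⟩)
    rw [Sentence.Realize, BoundedFormula.realize_exs]
    refine ⟨fun i => ⟨xs i, hxsS i⟩, ?_⟩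
    rw [realize_allsAbove]
    intro ys
    rw [← hφ.realize_embedding S.subtype]
    have key := hxs (fun i => (ys i : A))
    have h1 : (⇑S.subtype ∘ (default : Empty → ↥S)) = (default : Empty → A) :=
      funext fun x => x.elim
    have h2 : ⇑S.subtype ∘ Fin.append (fun i => ⟨xs i, hxsS i⟩) ys
        = Fin.append xs (fun i => (ys i : A)) := by
      funext i
      refine Fin.addCases (fun j => ?_) (fun j => ?_) i <;> simp [Function.comp]
    rw [h1, h2]
    exact key
  · exact ⟨(Substructure.subtype _).toHom, fun x => rfl⟩
end

section
/- Let B be a set with two binary relations H_B and V_B satisfying the grid conditions. Then for every b ∈ B there is a map h : ℕ×ℕ → B with h(0,0) = b such that H_B(h(k,ℓ), h(k+1,ℓ)) and V_B(h(k,ℓ), h(k,ℓ+1)) hold for all k, ℓ ∈ ℕ; that is, there is a homomorphism from the grid 𝔄_{ℕ×ℕ} to B sending the origin (0,0) to b. -/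
/-- If `(B, H, V)` satisfies the grid conditions, then for every
`b ∈ B` there is a homomorphism from the grid `ℕ × ℕ` to `B` sending the origin to `b`. -/
theorem grid_hom_into_gridlike_structure {B : Type*} (H V : B → B → Prop)
    (h1 : ∀ x : B, ∃ y, H x y) (h2 : ∀ x : B, ∃ y, V x y)
    (h3 : ∀ x y z v : B, H x y → V x z → V y v → H z v) (b : B) :
    ∃ h : ℕ × ℕ → B, h (0, 0) = b ∧
      (∀ k ℓ : ℕ, H (h (k, ℓ)) (h (k + 1, ℓ))) ∧
      (∀ k ℓ : ℕ, V (h (k, ℓ)) (h (k, ℓ + 1))) := by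
  classical
  choose f hf using h1
  choose g hg using h2
  refine ⟨fun p => g^[p.2] (f^[p.1] b), by simp, ?_, ?_⟩
  · intro k ℓ
    dsimp only
    induction ℓ with
    | zero =>
      simp only [Function.iterate_zero, id]
      rw [Function.iterate_succ_apply']
      exact hf _
    | succ n ih =>

      rw [Function.iterate_succ_apply', Function.iterate_succ_apply' (f := g) (n := n)]
      exact h3 _ _ _ _ ih (hg _) (hg _)
  · intro k ℓ
    dsimp only
    rw [Function.iterate_succ_apply']
    exact hg _
end

section
/- Let D be a set with binary relations H_D, V_D ⊆ D × D (a domino system without margin constraints). Suppose some set B with binary relations H_B, V_B satisfies the grid conditions and admits a map g : B → D with H_B(x,y) ⟹ (g x, g y) ∈ H_D and V_B(x,y) ⟹ (g x, g y) ∈ V_D. Then there exists a D-tiling of ℕ×ℕ, i.e., a map t : ℕ×ℕ → D such that (t(k,ℓ), t(k+1,ℓ)) ∈ H_D and (t(k,ℓ), t(k,ℓ+1)) ∈ V_D for all k, ℓ ∈ ℕ. -/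
/-- If some nonempty structure `(B, H_B, V_B)` satisfies the grid
conditions and maps homomorphically into a domino system `(D, H_D, V_D)`, then there is a
`D`-tiling of `ℕ × ℕ`. -/
theorem tiling_of_hom_from_gridlike_structure {D B : Type*}
    (HD VD : D → D → Prop) (HB VB : B → B → Prop) [Nonempty B]
    (h1 : ∀ x : B, ∃ y, HB x y) (h2 : ∀ x : B, ∃ y, VB x y)
    (h3 : ∀ x y z v : B, HB x y → VB x z → VB y v → HB z v)
    (g : B → D)
    (hg1 : ∀ x y : B, HB x y → HD (g x) (g y))
    (hg2 : ∀ x y : B, VB x y → VD (g x) (g y)) :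
    ∃ t : ℕ × ℕ → D,
      (∀ k ℓ : ℕ, HD (t (k, ℓ)) (t (k + 1, ℓ))) ∧
      (∀ k ℓ : ℕ, VD (t (k, ℓ)) (t (k, ℓ + 1))) := by
  classical
  obtain ⟨b0⟩ := ‹Nonempty B›
  -- horizontal row
  let u : ℕ → B := fun k => Nat.rec b0 (fun _ x => Classical.choose (h1 x)) k
  have hu : ∀ k, HB (u k) (u (k + 1)) := fun k => Classical.choose_spec (h1 (u k))
  -- vertical step
  let v : B → B := fun x => Classical.choose (h2 x)
  have hv : ∀ x, VB x (v x) := fun x => Classical.choose_spec (h2 x)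
  let b : ℕ × ℕ → B := fun p => v^[p.2] (u p.1)
  have hb : ∀ k ℓ, HB (v^[ℓ] (u k)) (v^[ℓ] (u (k + 1))) := by
    intro k ℓ
    induction ℓ with
    | zero => exact hu k
    | succ n ih =>
      rw [Function.iterate_succ_apply', Function.iterate_succ_apply']
      exact h3 _ _ _ _ ih (hv _) (hv _)
  refine ⟨fun p => g (b p), fun k ℓ => hg1 _ _ (hb k ℓ), fun k ℓ => hg2 _ _ ?_⟩
  show VB (v^[ℓ] (u k)) (v^[ℓ + 1] (u k))
  rw [Function.iterate_succ_apply']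
  exact hv _
end

section
/- Let D be a set with binary relations H_D, V_D ⊆ D × D. Suppose some FINITE set B with binary relations H_B, V_B satisfies the grid conditions and admits a map g : B → D with H_B(x,y) ⟹ (g x, g y) ∈ H_D and V_B(x,y) ⟹ (g x, g y) ∈ V_D. Then there exists an ultimately periodic D-tiling of ℕ×ℕ: a map t : ℕ×ℕ → D with (t(k,ℓ), t(k+1,ℓ)) ∈ H_D and (t(k,ℓ), t(k,ℓ+1)) ∈ V_D for all k, ℓ, together with k_init, ℓ_init ∈ ℕ and positive k_per, ℓ_per ∈ ℕ such that t(k + k_per, ℓ) = t(k,ℓ) whenever k ≥ k_init and t(k, ℓ + ℓ_per) = t(k,ℓ) whenever ℓ ≥ ℓ_init. -/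
/-- Iterates of a self-map of a finite type are eventually periodic, uniformly. -/
lemma iterate_eventually_periodic {B : Type*} [Finite B] (f : B → B) :
    ∃ m n : ℕ, 0 < n ∧ ∀ ℓ, m ≤ ℓ → ∀ x, f^[ℓ + n] x = f^[ℓ] x := by
  obtain ⟨i, j, hij, hfe⟩ := Finite.exists_ne_map_eq_of_infinite (fun k : ℕ => f^[k])
  wlog h : i < j generalizing i j
  · exact this j i hij.symm hfe.symm (lt_of_le_of_ne (not_lt.mp h) hij.symm)
  refine ⟨i, j - i, Nat.sub_pos_of_lt h, fun ℓ hℓ x => ?_⟩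
  have key : f^[i + (j - i)] = f^[i] := by
    rw [Nat.add_sub_cancel' h.le]; exact hfe.symm
  have : ℓ + (j - i) = (ℓ - i) + (i + (j - i)) := by omega
  rw [this, Function.iterate_add_apply, key, ← Function.iterate_add_apply]
  congr 1; omega

/-- If some FINITE nonempty structure `(B, H_B, V_B)` satisfies the grid
conditions and maps homomorphically into a domino system `(D, H_D, V_D)`, then there is an
ultimately periodic `D`-tiling of `ℕ × ℕ`. -/
theorem ultimately_periodic_tiling_of_hom_from_finite_gridlike_structure {D B : Type*}
    (HD VD : D → D → Prop) (HB VB : B → B → Prop) [Nonempty B] [Finite B]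
    (h1 : ∀ x : B, ∃ y, HB x y) (h2 : ∀ x : B, ∃ y, VB x y)
    (h3 : ∀ x y z v : B, HB x y → VB x z → VB y v → HB z v)
    (g : B → D)
    (hg1 : ∀ x y : B, HB x y → HD (g x) (g y))
    (hg2 : ∀ x y : B, VB x y → VD (g x) (g y)) :
    ∃ (t : ℕ × ℕ → D) (kinit ℓinit kper ℓper : ℕ),
      0 < kper ∧ 0 < ℓper ∧
      (∀ k ℓ : ℕ, HD (t (k, ℓ)) (t (k + 1, ℓ))) ∧
      (∀ k ℓ : ℕ, VD (t (k, ℓ)) (t (k, ℓ + 1))) ∧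
      (∀ k ℓ : ℕ, kinit ≤ k → t (k + kper, ℓ) = t (k, ℓ)) ∧
      (∀ k ℓ : ℕ, ℓinit ≤ ℓ → t (k, ℓ + ℓper) = t (k, ℓ)) := by
  classical
  set hs : B → B := fun x => (h1 x).choose with hhs
  have hH : ∀ x, HB x (hs x) := fun x => (h1 x).choose_spec
  set vs : B → B := fun x => (h2 x).choose with hvs
  have hV : ∀ x, VB x (vs x) := fun x => (h2 x).choose_spec
  -- HB is preserved by simultaneous vertical iteration
  have hlift : ∀ (ℓ : ℕ) (x y : B), HB x y → HB (vs^[ℓ] x) (vs^[ℓ] y) := by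
    intro ℓ
    induction ℓ with
    | zero => intro x y h; exact h
    | succ n ih =>
      intro x y h
      rw [Function.iterate_succ_apply', Function.iterate_succ_apply']
      exact h3 _ _ _ _ (ih x y h) (hV _) (hV _)
  obtain ⟨x0⟩ := ‹Nonempty B›
  set b : ℕ × ℕ → B := fun p => vs^[p.2] (hs^[p.1] x0) with hb
  obtain ⟨kinit, kper, hkper, hk⟩ := iterate_eventually_periodic hs
  obtain ⟨ℓinit, ℓper, hℓper, hℓ⟩ := iterate_eventually_periodic vs
  refine ⟨fun p => g (b p), kinit, ℓinit, kper, ℓper, hkper, hℓper, ?_, ?_, ?_, ?_⟩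
  · intro k ℓ
    apply hg1
    simp only [hb]
    apply hlift
    rw [Function.iterate_succ_apply']
    exact hH _
  · intro k ℓ
    apply hg2
    simp only [hb]
    rw [Function.iterate_succ_apply']
    exact hV _
  · intro k ℓ hkk
    simp only [hb]
    rw [hk k hkk x0]
  · intro k ℓ hll
    simp only [hb]
    rw [hℓ ℓ hll]
end

section
/- Let 𝔊 be a finite set with a binary relation E_𝔊. Define the class C of all structures 𝔅 (sets with a binary relation E_𝔅) satisfying: if there exists an E-preserving map K₃ → 𝔅 then there exists an E-preserving map 𝔊 → 𝔅. Then C is closed under homomorphisms (𝔅 ∈ C together with an E-preserving map 𝔅 → 𝔅′ implies 𝔅′ ∈ C) if and only if 𝔊 is 3-colorable, i.e., there exists an E-preserving map 𝔊 → K₃. -/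
universe u

/-- For a finite graph `(G, E)`, the class
`C = {𝔅 : (K₃ → 𝔅) → (𝔊 → 𝔅)}` (of structures in which a homomorphic copy of `K₃`
forces a homomorphic copy of `𝔊`) is closed under homomorphisms iff `𝔊` is
3-colorable. -/
theorem threeColorability_iff_homclosed {G : Type u} [Finite G] (E : G → G → Prop) :
    (∀ (B : Type u) (EB : B → B → Prop),
        ((∃ f : Fin 3 → B, ∀ i j : Fin 3, i ≠ j → EB (f i) (f j)) →
            ∃ g : G → B, ∀ x y : G, E x y → EB (g x) (g y)) →
          ∀ (B' : Type u) (EB' : B' → B' → Prop),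
            (∃ h : B → B', ∀ x y : B, EB x y → EB' (h x) (h y)) →
              ((∃ f : Fin 3 → B', ∀ i j : Fin 3, i ≠ j → EB' (f i) (f j)) →
                ∃ g : G → B', ∀ x y : G, E x y → EB' (g x) (g y))) ↔
      ∃ c : G → Fin 3, ∀ x y : G, E x y → c x ≠ c y := by
  constructor
  · intro H
    -- apply closedness to B = K₃ with empty relation (vacuously in C),
    -- identity map into B' = K₃ with the real relation
    have key := H (ULift (Fin 3)) (fun _ _ => False)
      (fun ⟨f, hf⟩ => absurd (hf 0 1 (by decide)) (fun h => h))
      (ULift (Fin 3)) (fun a b => a.down ≠ b.down)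
      ⟨id, fun _ _ h => h.elim⟩
      ⟨fun i => ⟨i⟩, fun i j hij => hij⟩
    obtain ⟨g, hg⟩ := key
    exact ⟨fun x => (g x).down, fun x y hxy => hg x y hxy⟩
  · rintro ⟨c, hc⟩ B EB _ B' EB' _ ⟨f, hf⟩
    exact ⟨fun x => f (c x), fun x y hxy => hf _ _ (hc x y hxy)⟩
end

section
/- Let S = (C₁, …, C_n) be a 3SAT instance over propositional variables p₁, …, p_m. Then the propositional formula ⋀_{1≤i≤n} ⋁ C_i is satisfiable if and only if there exist a finite σ₃-structure 𝔅 satisfying the Φ_3SAT conditions and a homomorphism from 𝔅 to 𝔄_S; that is, if and only if 𝔄_S ∈ homcl(FinMod(Φ_3SAT)). -/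
/-- A 3SAT instance `S = (C₁, …, C_n)` over variables `p₁, …, p_m`
(each clause a set of exactly 3 literals, a literal being a pair of a variable and a
polarity) is satisfiable iff the structure `𝔄_S` lies in the homomorphism closure of the
finite models of `Φ_3SAT`.

The domain of `𝔄_S` is `Fin (n+1) ⊕ (Fin m × Bool)`, where `Sum.inl i` represents
`a_{i+1}` and `Sum.inr (j, tt)`, `Sum.inr (j, ff)` represent `b_{j+1}`, `b′_{j+1}`.
The right-hand side asserts the existence of a finite σ₃-structure `𝔅` satisfying the
`Φ_3SAT` conditions together with a map `h : 𝔅 → 𝔄_S` preserving all seven relations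
(the relations of `𝔄_S` are written out explicitly in the preservation conditions). -/
theorem threeSat_satisfiable_iff_in_homclosure
    (n m : ℕ) (hn : 0 < n) (S : Fin n → Finset (Fin m × Bool))
    (hS3 : ∀ i : Fin n, (S i).card = 3) :
    (∃ α : Fin m → Bool, ∀ i : Fin n, ∃ l ∈ S i, α l.1 = l.2) ↔
      ∃ (B : Type) (_ : Finite B)
        (Fi CL Ni Se : B → Prop) (Ne Li Cm : B → B → Prop)
        (h : B → (Fin (n + 1) ⊕ (Fin m × Bool))),
        -- the Φ_3SAT conditions on 𝔅
        (∃ x, Fi x) ∧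
        (∀ x, Fi x → CL x) ∧
        (∀ x, CL x → ∃ y, Ne x y ∧ (CL y ∨ Ni y)) ∧
        (∀ x, CL x → ∃ y, Li x y ∧ Se y) ∧
        (∀ x y, Se x → Se y → Cm x y) ∧
        -- `h` is a homomorphism from 𝔅 into 𝔄_S
        (∀ x, Fi x → h x = Sum.inl 0) ∧
        (∀ x, CL x → ∃ i : Fin (n + 1), h x = Sum.inl i ∧ (i : ℕ) < n) ∧
        (∀ x, Ni x → ∃ i : Fin (n + 1), h x = Sum.inl i ∧ (i : ℕ) = n) ∧
        (∀ x, Se x → ∃ l : Fin m × Bool, h x = Sum.inr l) ∧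
        (∀ x y, Ne x y → ∃ i j : Fin (n + 1),
            h x = Sum.inl i ∧ h y = Sum.inl j ∧ (j : ℕ) = (i : ℕ) + 1) ∧
        (∀ x y, Li x y → ∃ (i : Fin (n + 1)) (hi : (i : ℕ) < n) (l : Fin m × Bool),
            h x = Sum.inl i ∧ h y = Sum.inr l ∧ l ∈ S ⟨(i : ℕ), hi⟩) ∧
        (∀ x y, Cm x y → ∃ l l' : Fin m × Bool,
            h x = Sum.inr l ∧ h y = Sum.inr l' ∧ (l.1 ≠ l'.1 ∨ l.2 = l'.2)) := by
  classical
  constructor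
  · rintro ⟨α, hα⟩
    refine ⟨Fin (n + 1) ⊕ (Fin m × Bool), inferInstance,
      (fun x => x = Sum.inl 0),
      (fun x => ∃ i : Fin (n + 1), x = Sum.inl i ∧ (i : ℕ) < n),
      (fun x => ∃ i : Fin (n + 1), x = Sum.inl i ∧ (i : ℕ) = n),
      (fun x => ∃ l : Fin m × Bool, x = Sum.inr l ∧ α l.1 = l.2),
      (fun x y => ∃ i j : Fin (n + 1), x = Sum.inl i ∧ y = Sum.inl j ∧ (j : ℕ) = (i : ℕ) + 1),
      (fun x y => ∃ (i : Fin (n + 1)) (hi : (i : ℕ) < n) (l : Fin m × Bool),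
        x = Sum.inl i ∧ y = Sum.inr l ∧ l ∈ S ⟨(i : ℕ), hi⟩ ∧ α l.1 = l.2),
      (fun x y => (∃ l : Fin m × Bool, x = Sum.inr l ∧ α l.1 = l.2) ∧
        (∃ l : Fin m × Bool, y = Sum.inr l ∧ α l.1 = l.2)),
      id, ⟨Sum.inl 0, rfl⟩, ?_, ?_, ?_, ?_, ?_, ?_, ?_, ?_, ?_, ?_, ?_⟩
    · rintro x rfl
      exact ⟨0, rfl, by simpa using hn⟩
    · rintro x ⟨i, rfl, hi⟩
      have hlt : (i : ℕ) + 1 < n + 1 := by omega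
      refine ⟨Sum.inl ⟨(i : ℕ) + 1, hlt⟩, ⟨i, ⟨(i : ℕ) + 1, hlt⟩, rfl, rfl, rfl⟩, ?_⟩
      by_cases h' : (i : ℕ) + 1 < n
      · exact Or.inl ⟨_, rfl, h'⟩
      · exact Or.inr ⟨_, rfl, by simp only [Fin.val_mk]; omega⟩
    · rintro x ⟨i, rfl, hi⟩
      obtain ⟨l, hl, hαl⟩ := hα ⟨(i : ℕ), hi⟩
      exact ⟨Sum.inr l, ⟨i, hi, l, rfl, rfl, hl, hαl⟩, ⟨l, rfl, hαl⟩⟩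
    · intro x y hx hy; exact ⟨hx, hy⟩
    · rintro x rfl; rfl
    · rintro x ⟨i, rfl, hi⟩; exact ⟨i, rfl, hi⟩
    · rintro x ⟨i, rfl, hi⟩; exact ⟨i, rfl, hi⟩
    · rintro x ⟨l, rfl, _⟩; exact ⟨l, rfl⟩
    · rintro x y ⟨i, j, rfl, rfl, hij⟩; exact ⟨i, j, rfl, rfl, hij⟩
    · rintro x y ⟨i, hi, l, rfl, rfl, hl, _⟩; exact ⟨i, hi, l, rfl, rfl, hl⟩
    · rintro x y ⟨⟨l, rfl, h1⟩, ⟨l', rfl, h2⟩⟩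
      refine ⟨l, l', rfl, rfl, ?_⟩
      by_cases hll : l.1 = l'.1
      · exact Or.inr (by rw [← h1, ← h2, hll])
      · exact Or.inl hll
  · rintro ⟨B, _, Fi, CL, Ni, Se, Ne, Li, Cm, h, ⟨x0, hx0⟩, hFC, hCN, hCL, hCm,
      hhF, hhC, hhN, hhS, hhNe, hhLi, hhCm⟩
    set α : Fin m → Bool := fun j =>
      if ∃ x, Se x ∧ h x = Sum.inr (j, true) then true else false with hαdef
    have key : ∀ (x : B) (l : Fin m × Bool), Se x → h x = Sum.inr l → α l.1 = l.2 := by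
      intro x l hSe hx
      have noconf : ¬ (∃ y, Se y ∧ h y = Sum.inr (l.1, !l.2)) := by
        rintro ⟨y, hSey, hy⟩
        obtain ⟨l₀, l₀', hx', hy', hcond⟩ := hhCm x y (hCm x y hSe hSey)
        rw [hx] at hx'; rw [hy] at hy'
        have e1 : l₀ = l := (Sum.inr.inj hx').symm
        have e2 : l₀' = (l.1, !l.2) := (Sum.inr.inj hy').symm
        rcases hcond with hc | hc
        · exact hc (by rw [e1, e2])
        · rw [e1, e2] at hc; simp at hc
      cases hl2 : l.2 with
      | true =>
        have : ∃ y, Se y ∧ h y = Sum.inr (l.1, true) := by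
          refine ⟨x, hSe, ?_⟩
          rw [hx]; congr 1; exact Prod.ext rfl hl2
        simp [hαdef, this]
      | false =>
        have : ¬ ∃ y, Se y ∧ h y = Sum.inr (l.1, true) := by
          rw [hl2] at noconf; simpa using noconf
        simp [hαdef, this]
    have chain : ∀ i : ℕ, i < n → ∃ x, CL x ∧ ∃ j : Fin (n + 1), h x = Sum.inl j ∧ (j : ℕ) = i := by
      intro i
      induction i with
      | zero => exact fun _ => ⟨x0, hFC x0 hx0, 0, hhF x0 hx0, rfl⟩
      | succ k ih =>
        intro hk
        obtain ⟨x, hCLx, j, hhx, hj⟩ := ih (by omega)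
        obtain ⟨y, hNe, hy⟩ := hCN x hCLx
        obtain ⟨i', j', hxi, hyj, hsucc⟩ := hhNe x y hNe
        have hi' : (i' : ℕ) = k := by
          rw [hhx] at hxi
          rw [← Sum.inl.inj hxi, hj]
        rcases hy with hy | hy
        · exact ⟨y, hy, j', hyj, by omega⟩
        · obtain ⟨i'', hy'', hn''⟩ := hhN y hy
          rw [hyj] at hy''
          obtain rfl : j' = i'' := Sum.inl.inj hy''
          omega
    refine ⟨α, fun i => ?_⟩
    obtain ⟨x, hCLx, j, hhx, hj⟩ := chain i i.2
    obtain ⟨y, hLi, hSe⟩ := hCL x hCLx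
    obtain ⟨i', hi', l, hxi, hyl, hlS⟩ := hhLi x y hLi
    have hi'val : (i' : ℕ) = (i : ℕ) := by
      rw [hhx] at hxi
      rw [← Sum.inl.inj hxi, hj]
    have : (⟨(i' : ℕ), hi'⟩ : Fin n) = i := Fin.ext hi'val
    rw [this] at hlS
    exact ⟨l, hlS, key y l hSe hyl⟩
end
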